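/- arXiv:2511.02935 — 5 statements merged into one kernel-verified Lean document; each statement's English description precedes it below -/
import Mathlib

section
/- For a matroid M on ground set E and a subset F ⊆ E, F is a flat of M if and only if E \ F is a union of circuits (a cyclic set) of the dual matroid M*. -/
open Set

variable {α β : Type*}

/-- The rank of a matroid: the (common) cardinality of its bases. -/
noncomputable def Matroid.mrk (M : Matroid α) : ℕ := sSup (Set.ncard '' {B | M.IsBase B})

/-- A hyperplane of a matroid: a maximal proper flat
(equivalently, a flat of rank `r(M) - 1`). -/
def Matroid.IsHyperplane (M : Matroid α) (H : Set α) : Prop :=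
  M.IsFlat H ∧ H ≠ M.E ∧ ∀ F, M.IsFlat F → H ⊆ F → F = H ∨ F = M.E

/-- A circuit of a matroid: a minimal dependent set. -/
def Matroid.IsCircuit' (M : Matroid α) (Ct : Set α) : Prop :=
  Ct ⊆ M.E ∧ ¬ M.Indep Ct ∧ ∀ D, D ⊂ Ct → M.Indep D

/-- A point of a matroid: a rank-one flat, i.e. the closure of a nonloop. -/
def Matroid.IsPoint (M : Matroid α) (P : Set α) : Prop :=
  M.IsFlat P ∧ ∃ e, e ∉ M.closure ∅ ∧ P = M.closure {e}

/-- Dual independence in terms of the closure of the complement. -/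
lemma dual_indep_iff_closure (M : Matroid α) {X : Set α} (hX : X ⊆ M.E) :
    M✶.Indep X ↔ M.closure (M.E \ X) = M.E := by
  rw [← Matroid.coindep_def, M.coindep_iff_closure_compl_eq_ground hX]

/-- For a flat `F` and `e ∈ E \ F`, there is a dual circuit containing `e`
and disjoint from `F`. -/
lemma exists_cocircuit (M : Matroid α) {F : Set α} (hFl : M.IsFlat F) {e : α}
    (he : e ∈ M.E \ F) : ∃ C, M✶.IsCircuit' C ∧ e ∈ C ∧ C ⊆ M.E \ F := by
  obtain ⟨I, hI⟩ := M.exists_isBasis F hFl.subset_ground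
  have hclI : M.closure I = F := by rw [hI.closure_eq_closure, hFl.closure]
  have heI : e ∉ I := fun h => he.2 (hI.subset h)
  have hins : M.Indep (insert e I) := by
    rw [hI.indep.insert_indep_iff_of_notMem heI]
    exact ⟨he.1, hclI ▸ he.2⟩
  obtain ⟨B, hB, hIB⟩ := hins.exists_isBase_superset
  have heB : e ∈ B := hIB (mem_insert _ _)
  set H := M.closure (B \ {e}) with hH
  have hIBe : I ⊆ B \ {e} := fun x hx => ⟨hIB (mem_insert_of_mem _ hx), fun h => heI (h ▸ hx)⟩
  have hFH : F ⊆ H := hclI ▸ M.closure_subset_closure hIBe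
  have heH : e ∉ H := hB.indep.notMem_closure_diff_of_mem heB
  have hHE : H ⊆ M.E := M.closure_subset_ground _
  -- key: inserting any x ∈ E \ H into B \ {e} gives a base
  have hkey : ∀ x ∈ M.E \ H, M.IsBase (insert x (B \ {e})) := by
    rintro x ⟨hxE, hxH⟩
    rcases eq_or_ne x e with rfl | hxe
    · rwa [insert_diff_singleton, insert_eq_of_mem heB]
    have hxB : x ∉ B := fun hxB =>
      hxH (M.subset_closure _ ((diff_subset (t := {e})).trans hB.subset_ground)
        ⟨hxB, hxe⟩)
    refine hB.exchange_isBase_of_indep hxB ?_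
    rw [(hB.indep.diff {e}).insert_indep_iff_of_notMem (fun h => hxB h.1)]
    exact ⟨hxE, hxH⟩
  refine ⟨M.E \ H, ⟨?_, ?_, ?_⟩, ⟨he.1, heH⟩, diff_subset_diff_right hFH⟩
  · exact diff_subset
  · rw [dual_indep_iff_closure M diff_subset, diff_diff_cancel_left hHE,
      hH, Matroid.closure_closure]
    intro h
    apply heH
    rw [hH, h]
    exact he.1
  · intro D hD
    have hDE : D ⊆ M.E := hD.subset.trans diff_subset
    rw [dual_indep_iff_closure M hDE]
    obtain ⟨x, hxEH, hxD⟩ := exists_of_ssubset hD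
    have hx : insert x (B \ {e}) ⊆ M.E \ D := by
      refine insert_subset ⟨hxEH.1, hxD⟩ fun y hy =>
        ⟨hB.subset_ground hy.1, fun hyD => (hD.subset hyD).2
          (M.subset_closure (B \ {e}) ((diff_subset (t := {e})).trans hB.subset_ground) hy)⟩
    refine subset_antisymm (M.closure_subset_ground _) ?_
    calc M.E = M.closure (insert x (B \ {e})) := (hkey x hxEH).closure_eq.symm
      _ ⊆ M.closure (M.E \ D) := M.closure_subset_closure hx

/-- `F` is a flat of `M` iff `E \ F` is a union of circuits
(a cyclic set) of the dual matroid `M✶`. -/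
theorem flat_iff_compl_cyclic_dual (M : Matroid α) [M.Finite] (F : Set α)
    (hF : F ⊆ M.E) :
    M.IsFlat F ↔ ∃ 𝓒 : Set (Set α), (∀ Ct ∈ 𝓒, M✶.IsCircuit' Ct) ∧ M.E \ F = ⋃₀ 𝓒 := by
  constructor
  · intro hFl
    refine ⟨{C | M✶.IsCircuit' C ∧ C ⊆ M.E \ F}, fun Ct hCt => hCt.1, ?_⟩
    apply subset_antisymm
    · intro e he
      obtain ⟨C, hC, heC, hCF⟩ := exists_cocircuit M hFl he
      exact ⟨C, ⟨hC, hCF⟩, heC⟩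
    · exact sUnion_subset fun C hC => hC.2
  · rintro ⟨𝓒, h𝓒, hU⟩
    have hclF : M.closure F ⊆ F := by
      intro x hx
      by_contra hxF
      have hxE : x ∈ M.E := M.closure_subset_ground _ hx
      obtain ⟨Ct, hCt𝓒, hxCt⟩ : ∃ Ct ∈ 𝓒, x ∈ Ct := by
        have : x ∈ ⋃₀ 𝓒 := hU ▸ ⟨hxE, hxF⟩
        exact this
      obtain ⟨hCtE, hCtdep, hCtmin⟩ := h𝓒 Ct hCt𝓒
      have hCtEF : Ct ⊆ M.E \ F := hU ▸ subset_sUnion_of_mem hCt𝓒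
      have hFCt : F ⊆ M.E \ Ct := fun y hy => ⟨hF hy, fun hyCt => (hCtEF hyCt).2 hy⟩
      have hxcl : x ∈ M.closure (M.E \ Ct) := M.closure_subset_closure hFCt hx
      have hmin := hCtmin (Ct \ {x}) (sdiff_singleton_ssubset.mpr hxCt)
      rw [dual_indep_iff_closure M (diff_subset.trans hCtE)] at hmin
      have : M.E \ (Ct \ {x}) = insert x (M.E \ Ct) := by
        rw [diff_diff_right, inter_eq_self_of_subset_right (singleton_subset_iff.mpr hxE),
          union_singleton]
      rw [this, Matroid.closure_insert_eq_of_mem_closure hxcl] at hmin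
      rw [dual_indep_iff_closure M hCtE] at hCtdep
      exact hCtdep hmin
    refine ⟨fun I X hIF hIX => ?_, hF⟩
    have : X ⊆ M.closure I := hIX.subset_closure
    rw [hIF.closure_eq_closure] at this
    exact this.trans ((M.subset_closure F hF).antisymm hclF ▸ hclF)
end

section
/- Let X be a zero-nonzero pattern and let X' be obtained from X by appending one row. Then the matroid minimum rank satisfies mr(X) ≤ mr(X') ≤ mr(X) + 1, where mr(Y) denotes the minimum rank over all matroids M on the column set of Y such that the zero set of each row of Y is a flat of M. -/
open Set

variable {α β : Type*}

variable {R C : Type*}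

/-- Zero set of a set of columns: rows that are zero in every column of `A`. -/
def ZCol (X : R → C → Bool) (A : Set C) : Set R := {r | ∀ a ∈ A, X r a = false}

/-- Zero set of a set of rows: columns that are zero in every row of `B`. -/
def ZRow (X : R → C → Bool) (B : Set R) : Set C := {c | ∀ b ∈ B, X b c = false}

/-- The intersection lattice of a pattern. -/
def LX (X : R → C → Bool) : Set (Set C) := {F | ∃ S : Set R, F = ZRow X S}

/-- The class of matroids associated with a pattern `X`: matroids on the column
set in which the zero set of every row of `X` is a flat. -/
def RX (X : R → C → Bool) : Set (Matroid C) :=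
  {M | M.E = Set.univ ∧ ∀ r : R, M.IsFlat (ZRow X {r})}

/-- The matroid minimum rank of a pattern. -/
noncomputable def mr (X : R → C → Bool) : ℕ := sInf (Matroid.mrk '' RX X)

/-! ### Auxiliary lemmas -/

section Aux

variable {γ : Type*} {M : Matroid γ} {F I J Z : Set γ} {x : γ}

lemma Matroid.closure_flat' (M : Matroid γ) (X : Set γ) : M.IsFlat (M.closure X) := by
  have hne : Nonempty ↑{F | M.IsFlat F ∧ X ∩ M.E ⊆ F} :=
    ⟨⟨M.E, ⟨M.ground_isFlat, inter_subset_right⟩⟩⟩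
  rw [Matroid.closure_def, sInter_eq_iInter]
  exact Matroid.IsFlat.iInter fun F => F.2.1

lemma Matroid.flat_of_closure_subset (M : Matroid γ) (hFE : F ⊆ M.E)
    (h : M.closure F ⊆ F) : M.IsFlat F := by
  have h' : M.closure F = F := h.antisymm (M.subset_closure F hFE)
  rw [← h']
  exact M.closure_flat' F

lemma card_le_of_subset_closure (hI : M.Indep I) (hJ : M.Indep J)
    (hJI : J ⊆ M.closure I) : J.encard ≤ I.encard := by
  obtain ⟨J', hJ', hJJ'⟩ := hJ.subset_isBasis_of_subset hJI (M.closure_subset_ground I)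
  exact le_of_le_of_eq (encard_le_encard hJJ') (hJ'.encard_eq_encard hI.isBasis_closure)

lemma ncard_le_of_subset_closure (hI : M.Indep I) (hJ : M.Indep J)
    (hJI : J ⊆ M.closure I) (hfin : I.Finite) : J.ncard ≤ I.ncard := by
  rw [Set.ncard_def, Set.ncard_def]
  exact ENat.toNat_le_toNat (card_le_of_subset_closure hI hJ hJI) hfin.encard_lt_top.ne

lemma Matroid.mrk_eq_ncard_base {B : Set γ} (hB : M.IsBase B) : M.mrk = B.ncard := by
  have himg : Set.ncard '' {B' | M.IsBase B'} = {B.ncard} := by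
    ext n
    simp only [mem_image, mem_setOf_eq, mem_singleton_iff]
    constructor
    · rintro ⟨B', hB', rfl⟩
      exact hB'.ncard_eq_ncard_of_isBase hB
    · rintro rfl
      exact ⟨B, hB, rfl⟩
  rw [Matroid.mrk, himg, csSup_singleton]

end Aux

/-! ### The elementary lift construction -/

section Lift

variable {C : Type*} [Fintype C] {M : Matroid C} {Z I J F : Set C} {x : C}

/-- Independence predicate for the elementary lift of `M` with respect to `Z`. -/
def LIndep (M : Matroid C) (Z : Set C) (I : Set C) : Prop :=
  M.Indep (I ∩ Z) ∧ (M.Indep I ∨ ∃ e ∈ I, M.Indep (I \ {e}))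

lemma lindep_subset (hJ : LIndep M Z J) (hIJ : I ⊆ J) : LIndep M Z I := by
  refine ⟨hJ.1.subset (inter_subset_inter_left _ hIJ), ?_⟩
  rcases hJ.2 with hJi | ⟨e, heJ, hJe⟩
  · exact Or.inl (hJi.subset hIJ)
  by_cases heI : e ∈ I
  · exact Or.inr ⟨e, heI, hJe.subset (diff_subset_diff_left hIJ)⟩
  · exact Or.inl (hJe.subset (subset_diff_singleton hIJ heI))

lemma insert_inter_subset_insert_inter (x : C) (I Z : Set C) :
    insert x I ∩ Z ⊆ insert x (I ∩ Z) := by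
  rintro y ⟨hy1, hy2⟩
  rcases mem_insert_iff.1 hy1 with rfl | hyI
  · exact mem_insert _ _
  · exact mem_insert_of_mem _ ⟨hyI, hy2⟩

lemma lindep_insert_of_not_mem_closure (hE : M.E = univ)
    (hI : LIndep M Z I) (hxI : x ∉ I) (hx : x ∉ M.closure I) :
    LIndep M Z (insert x I) := by
  have hxE : x ∈ M.E := by rw [hE]; trivial
  have hxZ : x ∉ M.closure (I ∩ Z) :=
    fun hh => hx (M.closure_subset_closure inter_subset_left hh)
  have h1 : M.Indep (insert x (I ∩ Z)) := by
    rw [hI.1.insert_indep_iff_of_notMem (fun hh => hxI hh.1)]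
    exact ⟨hxE, hxZ⟩
  refine ⟨h1.subset (insert_inter_subset_insert_inter x I Z), ?_⟩
  rcases hI.2 with hIi | ⟨e, heI, hIe⟩
  · refine Or.inl ?_
    rw [hIi.insert_indep_iff_of_notMem hxI]
    exact ⟨hxE, hx⟩
  · refine Or.inr ⟨e, mem_insert_of_mem _ heI, ?_⟩
    have hxe : x ≠ e := fun hh => hxI (hh ▸ heI)
    rw [← insert_diff_singleton_comm hxe,
      hIe.insert_indep_iff_of_notMem (fun hh => hxI hh.1)]
    exact ⟨hxE, fun hh => hx (M.closure_subset_closure diff_subset hh)⟩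

lemma lindep_insert_of_indep (hIi : M.Indep I) (hIZ : M.Indep (insert x I ∩ Z))
    (hxI : x ∉ I) : LIndep M Z (insert x I) :=
  ⟨hIZ, Or.inr ⟨x, mem_insert _ _, by rwa [insert_diff_self_of_notMem hxI]⟩⟩

lemma lindep_ncard_bound (hI : LIndep M Z I) :
    ∃ J, M.Indep J ∧ J ⊆ I ∧ I.ncard ≤ J.ncard + 1 := by
  rcases hI.2 with hh | ⟨e, heI, he⟩
  · exact ⟨I, hh, Subset.rfl, Nat.le_succ _⟩
  · exact ⟨I \ {e}, he, diff_subset,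
      (ncard_diff_singleton_add_one heI I.toFinite).ge⟩

lemma lindep_aug (hE : M.E = univ) :
    ∀ ⦃I J : Set C⦄, LIndep M Z I → LIndep M Z J → I.ncard < J.ncard →
      ∃ e ∈ J, e ∉ I ∧ LIndep M Z (insert e I) := by
  intro I J hI hJ hcard
  by_contra hcon
  push_neg at hcon
  have hsubE : ∀ S : Set C, S ⊆ M.E := fun S => by rw [hE]; exact subset_univ S
  have hclaim1 : ∀ e ∈ J, e ∉ I → e ∈ M.closure I := by
    intro e heJ heI
    by_contra hecl
    exact hcon e heJ heI (lindep_insert_of_not_mem_closure hE hI heI hecl)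
  by_cases hIi : M.Indep I
  · -- `I` is independent in `M`.
    have hclaim2 : ∀ e ∈ J, e ∉ I → e ∈ Z := by
      intro e heJ heI
      by_contra heZ
      refine hcon e heJ heI (lindep_insert_of_indep hIi ?_ heI)
      have hinter : insert e I ∩ Z = I ∩ Z := by
        ext y
        simp only [mem_inter_iff, mem_insert_iff]
        constructor
        · rintro ⟨rfl | hy, hyZ⟩
          · exact absurd hyZ heZ
          · exact ⟨hy, hyZ⟩
        · rintro ⟨hy, hyZ⟩
          exact ⟨Or.inr hy, hyZ⟩
      rw [hinter]
      exact hI.1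
    have hclaim3 : ∀ e ∈ J, e ∉ I → e ∈ M.closure (I ∩ Z) := by
      intro e heJ heI
      by_contra hecl
      refine hcon e heJ heI (lindep_insert_of_indep hIi ?_ heI)
      have h1 : M.Indep (insert e (I ∩ Z)) := by
        rw [hI.1.insert_indep_iff_of_notMem (fun hh => heI hh.1)]
        exact ⟨by rw [hE]; trivial, hecl⟩
      exact h1.subset (insert_inter_subset_insert_inter e I Z)
    have hJZ : J ∩ Z ⊆ M.closure (I ∩ Z) := by
      rintro y ⟨hyJ, hyZ⟩
      by_cases hyI : y ∈ I
      · exact M.subset_closure (I ∩ Z) (hsubE _) ⟨hyI, hyZ⟩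
      · exact hclaim3 y hyJ hyI
    have h1 : (J ∩ Z).ncard ≤ (I ∩ Z).ncard :=
      ncard_le_of_subset_closure hI.1 hJ.1 hJZ (I ∩ Z).toFinite
    have h2 : (J \ Z).ncard ≤ (I \ Z).ncard := by
      refine ncard_le_ncard ?_ (I \ Z).toFinite
      rintro y ⟨hyJ, hyZ⟩
      by_cases hyI : y ∈ I
      · exact ⟨hyI, hyZ⟩
      · exact absurd (hclaim2 y hyJ hyI) hyZ
    have h3 := ncard_inter_add_ncard_diff_eq_ncard J Z J.toFinite
    have h4 := ncard_inter_add_ncard_diff_eq_ncard I Z I.toFinite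
    omega
  · -- `I` is dependent in `M`.
    obtain ⟨f, hfI, hIf⟩ := hI.2.resolve_left hIi
    have hfE : f ∈ M.E := by rw [hE]; trivial
    have hfcl : f ∈ M.closure (I \ {f}) := by
      by_contra hf
      rw [hIf.notMem_closure_iff_of_notMem (by simp) hfE] at hf
      rw [insert_diff_singleton, insert_eq_of_mem hfI] at hf
      exact hIi hf
    have hclI : M.closure I ⊆ M.closure (I \ {f}) := by
      refine Matroid.closure_subset_closure_of_subset_closure ?_
      intro y hy
      by_cases hyf : y = f
      · subst hyf; exact hfcl
      · exact M.subset_closure (I \ {f}) (hsubE _) ⟨hy, hyf⟩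
    obtain ⟨J', hJ'i, hJ'sub, hJ'card⟩ := lindep_ncard_bound hJ
    have hJcl : J' ⊆ M.closure (I \ {f}) := by
      intro y hy
      apply hclI
      by_cases hyI : y ∈ I
      · exact M.subset_closure I (hsubE _) hyI
      · exact hclaim1 y (hJ'sub hy) hyI
    have h6 : J'.ncard ≤ (I \ {f}).ncard :=
      ncard_le_of_subset_closure hIf hJ'i hJcl (I \ {f}).toFinite
    have h5 : (I \ {f}).ncard + 1 = I.ncard :=
      ncard_diff_singleton_add_one hfI I.toFinite
    omega

/-- The elementary lift of `M` with respect to `Z`: a matroid in which `Z` and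
every flat of `M` are flats, with rank at most `r(M) + 1`. -/
noncomputable def Lift (M : Matroid C) (hE : M.E = univ) (Z : Set C) : Matroid C :=
  (IndepMatroid.ofFinite finite_univ (LIndep M Z)
    ⟨by simpa using M.empty_indep, Or.inl M.empty_indep⟩
    (fun I J hJ hIJ => lindep_subset hJ hIJ)
    (fun I J hI hJ hc => lindep_aug hE hI hJ hc)
    (fun I _ => subset_univ I)).matroid

@[simp] lemma lift_E (hE : M.E = univ) (Z : Set C) : (Lift M hE Z).E = univ := rfl

@[simp] lemma lift_indep_iff (hE : M.E = univ) :
    (Lift M hE Z).Indep I ↔ LIndep M Z I := by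
  exact Iff.rfl

lemma lift_flat_of_flat (hE : M.E = univ) (hF : M.IsFlat F) :
    (Lift M hE Z).IsFlat F := by
  apply (Lift M hE Z).flat_of_closure_subset (by rw [lift_E]; exact subset_univ F)
  intro x hx
  by_contra hxF
  obtain ⟨I, hI⟩ := (Lift M hE Z).exists_isBasis F (by rw [lift_E]; exact subset_univ F)
  have hxI : x ∉ I := fun hh => hxF (hI.subset hh)
  rw [← hI.closure_eq_closure] at hx
  have hLI : LIndep M Z I := (lift_indep_iff hE).1 hI.indep
  have hdep := (hI.indep.mem_closure_iff_of_notMem hxI).1 hx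
  have hxcl : x ∉ M.closure I := by
    intro hh
    have hsub : M.closure I ⊆ F := by
      rw [← hF.closure]
      exact M.closure_subset_closure hI.subset
    exact hxF (hsub hh)
  exact hdep.not_indep
    ((lift_indep_iff hE).2 (lindep_insert_of_not_mem_closure hE hLI hxI hxcl))

lemma lift_flat_Z (hE : M.E = univ) (Z : Set C) : (Lift M hE Z).IsFlat Z := by
  apply (Lift M hE Z).flat_of_closure_subset (by rw [lift_E]; exact subset_univ Z)
  intro x hx
  by_contra hxZ
  obtain ⟨I, hI⟩ := (Lift M hE Z).exists_isBasis Z (by rw [lift_E]; exact subset_univ Z)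
  have hxI : x ∉ I := fun hh => hxZ (hI.subset hh)
  rw [← hI.closure_eq_closure] at hx
  have hLI : LIndep M Z I := (lift_indep_iff hE).1 hI.indep
  have hIZ : I ∩ Z = I := inter_eq_left.2 hI.subset
  have hIi : M.Indep I := hIZ ▸ hLI.1
  have hdep := (hI.indep.mem_closure_iff_of_notMem hxI).1 hx
  apply hdep.not_indep
  rw [lift_indep_iff hE]
  refine ⟨?_, Or.inr ⟨x, mem_insert _ _, by rwa [insert_diff_self_of_notMem hxI]⟩⟩
  have hinter : insert x I ∩ Z = I ∩ Z := by
    ext y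
    simp only [mem_inter_iff, mem_insert_iff]
    constructor
    · rintro ⟨rfl | hy, hyZ⟩
      · exact absurd hyZ hxZ
      · exact ⟨hy, hyZ⟩
    · rintro ⟨hy, hyZ⟩
      exact ⟨Or.inr hy, hyZ⟩
  rw [hinter, hIZ]
  exact hIi

lemma lift_mrk_le (hE : M.E = univ) (Z : Set C) :
    (Lift M hE Z).mrk ≤ M.mrk + 1 := by
  obtain ⟨B', hB'⟩ := (Lift M hE Z).exists_isBase
  obtain ⟨B, hB⟩ := M.exists_isBase
  rw [Matroid.mrk_eq_ncard_base hB', Matroid.mrk_eq_ncard_base hB]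
  have hLI : LIndep M Z B' := (lift_indep_iff hE).1 hB'.indep
  obtain ⟨J, hJi, hJsub, hJcard⟩ := lindep_ncard_bound hLI
  obtain ⟨B'', hB'', hJB''⟩ := hJi.exists_isBase_superset
  have h1 : J.ncard ≤ B''.ncard := ncard_le_ncard hJB'' B''.toFinite
  have h2 : B''.ncard = B.ncard := hB''.ncard_eq_ncard_of_isBase hB
  omega

lemma freeOn_univ_flat (F : Set C) : (Matroid.freeOn (univ : Set C)).IsFlat F := by
  apply (Matroid.freeOn (univ : Set C)).flat_of_closure_subset (by simp)
  intro x hx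
  by_contra hxF
  have hFi : (Matroid.freeOn (univ : Set C)).Indep F := by simp
  exact ((hFi.mem_closure_iff_of_notMem hxF).1 hx).not_indep (by simp)

end Lift

/-- appending one row to a pattern changes the matroid minimum rank
by at most one: `mr(X) ≤ mr(X') ≤ mr(X) + 1`. -/
theorem mr_append_row [Fintype R] [Fintype C] (X : R → C → Bool)
    (X' : Option R → C → Bool) (h : ∀ r c, X' (some r) c = X r c) :
    mr X ≤ mr X' ∧ mr X' ≤ mr X + 1 := by
  have hZeq : ∀ r : R, ZRow X' {some r} = ZRow X {r} := by
    intro r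
    ext c
    simp [ZRow, h]
  have hsub : RX X' ⊆ RX X := by
    rintro M ⟨hME, hMflat⟩
    exact ⟨hME, fun r => hZeq r ▸ hMflat (some r)⟩
  have hne' : (RX X').Nonempty :=
    ⟨Matroid.freeOn (univ : Set C), Matroid.freeOn_ground, fun _ => freeOn_univ_flat _⟩
  have hne1 : (Matroid.mrk '' RX X').Nonempty := hne'.image _
  have himg : Matroid.mrk '' RX X' ⊆ Matroid.mrk '' RX X := image_mono hsub
  have hne0 : (Matroid.mrk '' RX X).Nonempty := hne1.mono himg
  constructor
  · exact Nat.sInf_le (himg (Nat.sInf_mem hne1))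
  · obtain ⟨M, hM, hMr⟩ := Nat.sInf_mem hne0
    have hME : M.E = univ := hM.1
    set Z : Set C := ZRow X' {none} with hZ
    have hmem : Lift M hME Z ∈ RX X' := by
      refine ⟨rfl, fun r => ?_⟩
      cases r with
      | none => exact lift_flat_Z hME Z
      | some r => exact hZeq r ▸ lift_flat_of_flat hME (hM.2 r)
    have hle : mr X' ≤ (Lift M hME Z).mrk := Nat.sInf_le ⟨_, hmem, rfl⟩
    have hle2 := lift_mrk_le hME Z
    have h3 : Matroid.mrk M = mr X := hMr
    omega
end

section
/- Let X be a zero-nonzero pattern and let X' be obtained by appending to X a new column whose zero set equals the intersection of the zero sets of some subset A of the columns of X. If M ∈ R(X) and M' is the principal extension of M obtained by freely adding a point to the closure of A (i.e., the single-element extension corresponding to the modular cut of all flats containing A), then M' ∈ R(X'). -/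
open Set

variable {α β : Type*}

variable {R C : Type*}

/-- let `X'` be obtained from `X` by appending a column (the element
`none`) whose zero set is the intersection of the zero sets of a set `A` of columns
of `X`.  If `M ∈ R(X)` and `M'` is the principal extension of `M` by a point freely
added to the closure of `A` (so that for each flat `F` of `M`, `F ∪ {e}` is a flat
of `M'` when `F` belongs to the modular cut of flats containing `A`, and `F` is a
flat of `M'` otherwise), then `M' ∈ R(X')`. -/
theorem principal_extension_mem_RX [Fintype R] [Fintype C] (X : R → C → Bool)
    (X' : R → Option C → Bool) (A : Set C)
    (hsome : ∀ r c, X' r (some c) = X r c)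
    (hnone : ∀ r, X' r none = false ↔ r ∈ ZCol X A)
    (M : Matroid C) (hM : M ∈ RX X)
    (M' : Matroid (Option C)) (hE' : M'.E = Set.univ)
    (hcut : ∀ F : Set C, M.IsFlat F → A ⊆ F → M'.IsFlat (insert none (some '' F)))
    (hnotcut : ∀ F : Set C, M.IsFlat F → ¬ A ⊆ F → M'.IsFlat (some '' F)) :
    M' ∈ RX X' := by
  obtain ⟨hE, hF⟩ := hM
  refine ⟨hE', fun r => ?_⟩
  have hflat : M.IsFlat (ZRow X {r}) := hF r
  have hz : ∀ {Y : R → C → Bool} (c : C), c ∈ ZRow Y {r} ↔ Y r c = false := by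
    intro Y c
    constructor
    · intro h; exact h r rfl
    · intro h b hb; cases hb; exact h
  have hz' : ∀ (c : Option C), c ∈ ZRow X' {r} ↔ X' r c = false := by
    intro c
    constructor
    · intro h; exact h r rfl
    · intro h b hb; cases hb; exact h
  by_cases hA : A ⊆ ZRow X {r}
  · have heq : ZRow X' {r} = insert none (some '' (ZRow X {r})) := by
      ext c
      rw [hz']
      cases c with
      | none =>
        simp only [Set.mem_insert_iff, Set.mem_image, true_or, iff_true]
        rw [hnone r]
        intro a ha
        exact (hz a).mp (hA ha)
      | some c =>
        rw [hsome]
        constructor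
        · intro h; exact Or.inr ⟨c, (hz c).mpr h, rfl⟩
        · rintro (h | ⟨c', hc', hcc⟩)
          · exact absurd h (by simp)
          · cases hcc; exact (hz c).mp hc'
    rw [heq]; exact hcut _ hflat hA
  · have heq : ZRow X' {r} = some '' (ZRow X {r}) := by
      ext c
      rw [hz']
      cases c with
      | none =>
        simp only [Set.mem_image]
        constructor
        · intro h
          exact absurd (fun a ha => (hz a).mpr ((hnone r).mp h a ha)) hA
        · rintro ⟨c', _, h⟩; exact absurd h (by simp)
      | some c =>
        rw [hsome]
        constructor
        · intro h; exact ⟨c, (hz c).mpr h, rfl⟩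
        · rintro ⟨c', hc', hcc⟩; cases hcc; exact (hz c).mp hc'
    rw [heq]; exact hnotcut _ hflat hA
end

section
/- Let X be a zero-nonzero pattern and M a matroid in R(X). Then the lattice L(X) is contained in the lattice of flats of M, and consequently the height of L(X) is at most the rank of M. In particular, the triangle number of X (which equals the height of L(X)) is a lower bound on the matroid minimum rank of X. -/
open Set

variable {α β : Type*}

variable {R C : Type*}

lemma flat_of_mem_LX (X : R → C → Bool) (M : Matroid C) (hM : M ∈ RX X)
    {F : Set C} (hF : F ∈ LX X) : M.IsFlat F := by
  obtain ⟨S, rfl⟩ := hF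
  rcases S.eq_empty_or_nonempty with rfl | hS
  · have : ZRow X (∅ : Set R) = M.E := by
      rw [hM.1]; ext c; simp [ZRow]
    rw [this]; exact M.ground_isFlat
  · have : ZRow X S = ⋂ r : S, ZRow X {r.1} := by
      ext c; simp [ZRow]
    rw [this]
    have : Nonempty S := hS.to_subtype
    exact Matroid.IsFlat.iInter (fun r => hM.2 r.1)

lemma chain_le_mrk [Fintype C] (X : R → C → Bool) (M : Matroid C) (hM : M ∈ RX X)
    (n : ℕ) (f : Fin (n + 1) → Set C) (hmono : StrictMono f)
    (hLX : ∀ i, f i ∈ LX X) : n ≤ M.mrk := by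
  have hE : M.E = Set.univ := hM.1
  have key : ∀ i : Fin (n + 1), ∃ I : Set C, M.Indep I ∧ I ⊆ f i ∧ (i : ℕ) ≤ I.ncard := by
    intro i
    induction i using Fin.induction with
    | zero => exact ⟨∅, M.empty_indep, empty_subset _, by simp⟩
    | succ j ih =>
      obtain ⟨I, hI, hIsub, hcard⟩ := ih
      have hlt : f j.castSucc ⊂ f j.succ := hmono ((Fin.castSucc_lt_succ (i := j)))
      obtain ⟨e, heY, heX⟩ := exists_of_ssubset hlt
      have heI : e ∉ I := fun h => heX (hIsub h)
      have hecl : e ∉ M.closure I := by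
        intro h
        exact heX ((M.closure_subset_closure hIsub).trans
          (flat_of_mem_LX X M hM (hLX j.castSucc)).closure.subset h)
      have hind : M.Indep (insert e I) :=
        (hI.insert_indep_iff_of_notMem heI).mpr ⟨by rw [hE]; trivial, hecl⟩
      refine ⟨insert e I, hind, insert_subset heY (hIsub.trans hlt.subset), ?_⟩
      rw [Set.ncard_insert_of_notMem heI (Set.toFinite I)]
      simpa using Nat.succ_le_succ hcard
  obtain ⟨I, hI, -, hcard⟩ := key (Fin.last n)
  simp only [Fin.val_last] at hcard
  obtain ⟨B, hB, hIB⟩ := hI.exists_isBase_superset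
  have hle : n ≤ B.ncard := hcard.trans (Set.ncard_le_ncard hIB (Set.toFinite B))
  refine hle.trans (le_csSup ?_ ⟨B, hB, rfl⟩)
  refine ⟨Fintype.card C, ?_⟩
  rintro x ⟨A, -, rfl⟩
  simpa [Set.ncard_univ, Nat.card_eq_fintype_card] using
    Set.ncard_le_ncard (subset_univ A) (Set.toFinite _)

/-- for `M ∈ R(X)`, every member of `L(X)` is a flat of `M`; hence
the height of `L(X)` (the triangle number of `X`) is at most the rank of `M`, and
so it is a lower bound on the matroid minimum rank of `X`. -/
theorem lattice_subset_flats_and_height_le_rank [Fintype R] [Fintype C]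
    (X : R → C → Bool) (M : Matroid C) (hM : M ∈ RX X) :
    (∀ F ∈ LX X, M.IsFlat F) ∧
    (∀ n : ℕ, ∀ f : Fin (n + 1) → Set C, StrictMono f → (∀ i, f i ∈ LX X) →
      n ≤ M.mrk) ∧
    (∀ n : ℕ, ∀ f : Fin (n + 1) → Set C, StrictMono f → (∀ i, f i ∈ LX X) →
      n ≤ mr X) := by
  refine ⟨fun F hF => flat_of_mem_LX X M hM hF,
    fun n f h1 h2 => chain_le_mrk X M hM n f h1 h2, fun n f h1 h2 => ?_⟩
  refine le_csInf ⟨M.mrk, M, hM, rfl⟩ ?_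
  rintro x ⟨M', hM', rfl⟩
  exact chain_le_mrk X M' hM' n f h1 h2
end

section
/- Let X be a zero-nonzero pattern with triangle number k (equivalently, the height of L(X) is k). If some matroid M of rank k in the class R(X^T) has an adjoint, then the matroid minimum rank of X equals k. -/
set_option linter.unusedSectionVars false


open Set

variable {α β : Type*}

variable {R C : Type*}

/-- `M'` is an adjoint of `M`: a simple matroid of the same rank admitting an
injective inclusion-reversing map from the lattice of flats of `M` to that of
`M'` restricting to a bijection from hyperplanes of `M` onto points of `M'`. -/
def Matroid.IsAdjoint (M : Matroid α) (M' : Matroid β) : Prop :=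
  (∀ e ∈ M'.E, M'.Indep {e}) ∧
  (∀ e ∈ M'.E, ∀ f ∈ M'.E, M'.closure {e} = M'.closure {f} → e = f) ∧
  M'.mrk = M.mrk ∧
  ∃ φ : Set α → Set β,
    (∀ F, M.IsFlat F → M'.IsFlat (φ F)) ∧
    Set.InjOn φ {F | M.IsFlat F} ∧
    (∀ F₁ F₂, M.IsFlat F₁ → M.IsFlat F₂ → F₁ ⊆ F₂ → φ F₂ ⊆ φ F₁) ∧
    Set.BijOn φ {H | M.IsHyperplane H} {P | M'.IsPoint P}

open Set

namespace Matroid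

variable {α : Type*} {M : Matroid α} {I J X Y F G : Set α} {e x : α}

/-- The rank of a set in a matroid, as a natural number. -/
noncomputable def rkn (M : Matroid α) (X : Set α) : ℕ :=
  (M.exists_isBasis' X).choose.ncard

lemma rkn_eq_of_basis' (hI : M.IsBasis' I X) : M.rkn X = I.ncard := by
  have h : M.IsBasis' (M.exists_isBasis' X).choose X := (M.exists_isBasis' X).choose_spec
  rw [Matroid.rkn, Set.ncard_def, h.encard_eq_encard hI, ← Set.ncard_def]

lemma rkn_eq_of_basis (hI : M.IsBasis I X) : M.rkn X = I.ncard :=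
  rkn_eq_of_basis' hI.isBasis'

lemma Indep.rkn_self (hI : M.Indep I) : M.rkn I = I.ncard :=
  rkn_eq_of_basis hI.isBasis_self

lemma rkn_empty (M : Matroid α) : M.rkn ∅ = 0 := by
  rw [M.empty_indep.rkn_self, Set.ncard_empty]

variable [Finite α]

lemma rkn_mono (M : Matroid α) (h : X ⊆ Y) : M.rkn X ≤ M.rkn Y := by
  obtain ⟨I, hI⟩ := M.exists_isBasis' X
  obtain ⟨J, hJ, hIJ⟩ := hI.indep.subset_isBasis'_of_subset (hI.subset.trans h)
  rw [rkn_eq_of_basis' hI, rkn_eq_of_basis' hJ]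
  exact Set.ncard_le_ncard hIJ J.toFinite

lemma Indep.ncard_le_rkn (hI : M.Indep I) (h : I ⊆ X) : I.ncard ≤ M.rkn X := by
  rw [← hI.rkn_self]; exact M.rkn_mono h

lemma rkn_closure_eq (M : Matroid α) (X : Set α) : M.rkn (M.closure X) = M.rkn X := by
  obtain ⟨I, hI⟩ := M.exists_isBasis' X
  rw [rkn_eq_of_basis' hI, rkn_eq_of_basis hI.isBasis_closure_right]

lemma rkn_insert_of_not_mem_closure (he : e ∈ M.E) (hX : X ⊆ M.E)
    (h : e ∉ M.closure X) : M.rkn (insert e X) = M.rkn X + 1 := by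
  obtain ⟨I, hI⟩ := M.exists_isBasis X
  have hcl : M.closure I = M.closure X := hI.closure_eq_closure
  have heI : e ∉ I := fun heI => h (hcl ▸ M.mem_closure_of_mem heI hI.indep.subset_ground)
  have hi : M.Indep (insert e I) := by
    rw [hI.indep.insert_indep_iff_of_notMem heI]
    exact ⟨he, hcl ▸ h⟩
  have hb : M.IsBasis (insert e I) (insert e X) := by
    refine hi.isBasis_of_subset_of_subset_closure (insert_subset_insert hI.subset) ?_
    refine insert_subset (M.mem_closure_of_mem (mem_insert _ _) hi.subset_ground) ?_
    exact hI.subset_closure.trans (M.closure_subset_closure (subset_insert _ _))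
  rw [rkn_eq_of_basis hb, rkn_eq_of_basis hI, Set.ncard_insert_of_notMem heI I.toFinite]

lemma rkn_insert_le (M : Matroid α) (e : α) (X : Set α) :
    M.rkn (insert e X) ≤ M.rkn X + 1 := by
  obtain ⟨J, hJ⟩ := M.exists_isBasis' (insert e X)
  have h1 : J \ {e} ⊆ X := by
    intro x hx
    rcases hJ.subset hx.1 with h | h
    · exact absurd h hx.2
    · exact h
  have h2 : (J \ {e}).ncard ≤ M.rkn X :=
    (hJ.indep.subset diff_subset).ncard_le_rkn h1
  have h3 : J.ncard ≤ (J \ {e}).ncard + 1 := by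
    by_cases he : e ∈ J
    · rw [Set.ncard_diff_singleton_add_one he J.toFinite]
    · rw [Set.diff_singleton_eq_self he]; omega
  rw [rkn_eq_of_basis' hJ]; omega

lemma mem_closure_iff_rkn (hX : X ⊆ M.E) (he : e ∈ M.E) :
    e ∈ M.closure X ↔ M.rkn (insert e X) = M.rkn X := by
  constructor
  · intro h
    rw [← M.rkn_closure_eq (insert e X), closure_insert_eq_of_mem_closure h,
      M.rkn_closure_eq]
  · intro h
    by_contra hc
    rw [rkn_insert_of_not_mem_closure he hX hc] at h
    omega

lemma rkn_submod (M : Matroid α) (hX : X ⊆ M.E) (hY : Y ⊆ M.E) :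
    M.rkn (X ∪ Y) + M.rkn (X ∩ Y) ≤ M.rkn X + M.rkn Y := by
  obtain ⟨I, hI⟩ := M.exists_isBasis (X ∩ Y) (inter_subset_left.trans hX)
  obtain ⟨J, hJ, hIJ⟩ := hI.indep.subset_isBasis_of_subset
    (hI.subset.trans (inter_subset_left.trans subset_union_left)) (union_subset hX hY)
  have hJXY : J ∩ X ∪ J ∩ Y = J := by
    rw [← inter_union_distrib_left]; exact inter_eq_self_of_subset_left hJ.subset
  have hcard : (J ∩ X).ncard + (J ∩ Y).ncard
      = J.ncard + ((J ∩ X) ∩ (J ∩ Y)).ncard := by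
    rw [← Set.ncard_union_add_ncard_inter (J ∩ X) (J ∩ Y), hJXY]
  have hIsub : I ⊆ (J ∩ X) ∩ (J ∩ Y) := by
    intro x hx
    exact ⟨⟨hIJ hx, (hI.subset hx).1⟩, hIJ hx, (hI.subset hx).2⟩
  have h1 : ((J ∩ X) ∩ (J ∩ Y)).ncard ≥ I.ncard :=
    Set.ncard_le_ncard hIsub ((J ∩ X) ∩ (J ∩ Y)).toFinite
  have h2 : (J ∩ X).ncard ≤ M.rkn X :=
    (hJ.indep.subset inter_subset_left).ncard_le_rkn inter_subset_right
  have h3 : (J ∩ Y).ncard ≤ M.rkn Y :=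
    (hJ.indep.subset inter_subset_left).ncard_le_rkn inter_subset_right
  rw [rkn_eq_of_basis hJ, rkn_eq_of_basis hI]
  omega

end Matroid

namespace Matroid

variable {α : Type*} {M : Matroid α} {I J X Y F G : Set α} {e x : α}

lemma flat_of_closure_subset' (hX : F ⊆ M.E) (h : M.closure F ⊆ F) : M.IsFlat F := by
  refine ⟨fun I X hI hIX => ?_, hX⟩
  have h1 : X ⊆ M.closure I := hIX.subset_closure
  rw [hI.closure_eq_closure] at h1
  exact h1.trans h

lemma closure_flat'_s19 (M : Matroid α) (X : Set α) : M.IsFlat (M.closure X) :=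
  flat_of_closure_subset' (M.closure_subset_ground X) (by rw [M.closure_closure])

lemma IsFlat.inter' (hF : M.IsFlat F) (hG : M.IsFlat G) : M.IsFlat (F ∩ G) := by
  refine flat_of_closure_subset' (inter_subset_left.trans hF.subset_ground) ?_
  refine subset_inter ?_ ?_
  · exact (M.closure_subset_closure inter_subset_left).trans hF.closure.subset
  · exact (M.closure_subset_closure inter_subset_right).trans hG.closure.subset

variable [Finite α]

lemma rkn_lt_of_flat_ssubset (hF : M.IsFlat F) (hG : M.IsFlat G) (h : F ⊂ G) :
    M.rkn F < M.rkn G := by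
  obtain ⟨x, hxG, hxF⟩ := exists_of_ssubset h
  have hx : x ∉ M.closure F := by rwa [hF.closure]
  have h1 : M.rkn (insert x F) = M.rkn F + 1 :=
    rkn_insert_of_not_mem_closure (hG.subset_ground hxG) hF.subset_ground hx
  have h2 : M.rkn (insert x F) ≤ M.rkn G :=
    M.rkn_mono (insert_subset hxG h.subset)
  omega

lemma flat_eq_of_subset_of_rkn_le (hF : M.IsFlat F) (hG : M.IsFlat G) (h : F ⊆ G)
    (hr : M.rkn G ≤ M.rkn F) : F = G := by
  by_contra hne
  exact absurd hr (not_le.2 (rkn_lt_of_flat_ssubset hF hG ⟨h, fun h' => hne (h.antisymm h')⟩))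

lemma exists_copoint (hF : M.IsFlat F) (he : e ∈ M.E) (heF : e ∉ F) :
    ∃ H, M.IsFlat H ∧ M.rkn H + 1 = M.rkn M.E ∧ F ⊆ H ∧ e ∉ H := by
  obtain ⟨I, hI⟩ := M.exists_isBasis F
  have hclI : M.closure I = F := by rw [hI.closure_eq_closure, hF.closure]
  have heI : e ∉ I := fun h => heF (hI.subset h)
  have hi : M.Indep (insert e I) := by
    rw [hI.indep.insert_indep_iff_of_notMem heI]
    exact ⟨he, hclI ▸ heF⟩
  obtain ⟨B, hB, hIB⟩ := hi.exists_isBase_superset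
  have heB : e ∈ B := hIB (mem_insert _ _)
  refine ⟨M.closure (B \ {e}), M.closure_flat'_s19 _, ?_, ?_, ?_⟩
  · rw [M.rkn_closure_eq, (hB.indep.subset diff_subset).rkn_self,
      rkn_eq_of_basis hB.isBasis_ground, Set.ncard_diff_singleton_add_one heB B.toFinite]
  · rw [← hclI]
    refine M.closure_subset_closure ?_
    exact subset_diff_singleton (fun x hx => hIB (mem_insert_of_mem _ hx)) heI
  · exact hB.indep.notMem_closure_sdiff_of_mem heB

lemma mrk_eq_rkn (M : Matroid α) : M.mrk = M.rkn M.E := by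
  have himg : Set.ncard '' {B | M.IsBase B} = {M.rkn M.E} := by
    ext n
    simp only [mem_image, mem_setOf_eq, mem_singleton_iff]
    constructor
    · rintro ⟨B, hB, rfl⟩
      rw [rkn_eq_of_basis hB.isBasis_ground]
    · rintro rfl
      obtain ⟨B, hB⟩ := M.exists_isBase
      exact ⟨B, hB, (rkn_eq_of_basis hB.isBasis_ground).symm⟩
  rw [Matroid.mrk, himg, csSup_singleton]

end Matroid


section AdjointLemmas

open Matroid

variable {α β : Type*} [Finite α] [Finite β] {M : Matroid α} {M' : Matroid β}
  {φ : Set α → Set β} {k : ℕ}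

/-- Rank formula for adjoint-like maps : `r'(φ F) = k - r(F)`. -/
lemma adjoint_rkn_phi
    (hk : M.rkn M.E = k) (hk' : M'.rkn M'.E = k)
    (hφ : ∀ F, M.IsFlat F → M'.IsFlat (φ F))
    (hinj : Set.InjOn φ {F | M.IsFlat F})
    (hrev : ∀ F₁ F₂, M.IsFlat F₁ → M.IsFlat F₂ → F₁ ⊆ F₂ → φ F₂ ⊆ φ F₁)
    {F : Set α} (hF : M.IsFlat F) : M'.rkn (φ F) + M.rkn F = k := by
  have claim1 : ∀ n : ℕ, ∀ F : Set α, M.IsFlat F → M.rkn F + n = k → n ≤ M'.rkn (φ F) := by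
    intro n
    induction n with
    | zero => intro F _ _; omega
    | succ n ih =>
      intro F hF hsum
      have hFE : F ≠ M.E := by
        intro h
        rw [h, hk] at hsum
        omega
      obtain ⟨x, hxE, hxF⟩ := exists_of_ssubset (hF.subset_ground.ssubset_of_ne hFE)
      set F' := M.closure (insert x F) with hF'def
      have hF' : M.IsFlat F' := M.closure_flat'_s19 _
      have hsubF' : F ⊆ F' := (subset_insert x F).trans
        (M.subset_closure _ (insert_subset hxE hF.subset_ground))
      have hrF' : M.rkn F' = M.rkn F + 1 := by
        rw [hF'def, M.rkn_closure_eq,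
          rkn_insert_of_not_mem_closure hxE hF.subset_ground (by rwa [hF.closure])]
      have hne : F ≠ F' := fun h => by rw [← h] at hrF'; omega
      have hφss : φ F' ⊂ φ F :=
        ⟨hrev F F' hF hF' hsubF', fun h =>
          hne (hinj hF' hF ((hrev F F' hF hF' hsubF').antisymm h)).symm⟩
      have hlt : M'.rkn (φ F') < M'.rkn (φ F) :=
        rkn_lt_of_flat_ssubset (hφ _ hF') (hφ _ hF) hφss
      have := ih F' hF' (by omega)
      omega
  have claim2 : ∀ j : ℕ, ∀ F : Set α, M.IsFlat F → M.rkn F = j → M'.rkn (φ F) + j ≤ k := by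
    intro j
    induction j with
    | zero =>
      intro F hF _
      have : M'.rkn (φ F) ≤ M'.rkn M'.E := M'.rkn_mono (hφ _ hF).subset_ground
      omega
    | succ j ih =>
      intro F hF hj
      obtain ⟨I, hI⟩ := M.exists_isBasis F
      have hIcard : I.ncard = j + 1 := by rw [← rkn_eq_of_basis hI, hj]
      have hIne : I.Nonempty := (Set.ncard_pos I.toFinite).mp (by omega)
      obtain ⟨x, hxI⟩ := hIne
      set F₀ := M.closure (I \ {x}) with hF₀def
      have hF₀ : M.IsFlat F₀ := M.closure_flat'_s19 _
      have hrF₀ : M.rkn F₀ = j := by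
        have h1 : (I \ {x}).ncard + 1 = I.ncard :=
          Set.ncard_diff_singleton_add_one hxI I.toFinite
        rw [hF₀def, M.rkn_closure_eq, (hI.indep.subset diff_subset).rkn_self]
        omega
      have hsub : F₀ ⊆ F := by
        have h2 : M.closure (I \ {x}) ⊆ M.closure I := M.closure_subset_closure diff_subset
        rwa [hI.closure_eq_closure, hF.closure] at h2
      have hne : F₀ ≠ F := fun h => by rw [h, hj] at hrF₀; omega
      have hφss : φ F ⊂ φ F₀ :=
        ⟨hrev F₀ F hF₀ hF hsub, fun h =>
          hne (hinj hF₀ hF (h.antisymm (hrev F₀ F hF₀ hF hsub)))⟩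
      have hlt : M'.rkn (φ F) < M'.rkn (φ F₀) :=
        rkn_lt_of_flat_ssubset (hφ _ hF) (hφ _ hF₀) hφss
      have := ih F₀ hF₀ hrF₀
      omega
  have hFk : M.rkn F ≤ k := by
    rw [← hk]; exact M.rkn_mono hF.subset_ground
  have h1 := claim1 (k - M.rkn F) F hF (by omega)
  have h2 := claim2 (M.rkn F) F hF rfl
  omega

/-- Key reflection lemma at points: if `H` is a copoint and `p ∉ H`,
then `φ H` is not contained in `φ (cl {p})`. -/
lemma adjoint_pt
    (hk : M.rkn M.E = k) (hk' : M'.rkn M'.E = k)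
    (hφ : ∀ F, M.IsFlat F → M'.IsFlat (φ F))
    (hinj : Set.InjOn φ {F | M.IsFlat F})
    (hrev : ∀ F₁ F₂, M.IsFlat F₁ → M.IsFlat F₂ → F₁ ⊆ F₂ → φ F₂ ⊆ φ F₁)
    {H : Set α} {p : α} (hH : M.IsFlat H) (hrH : M.rkn H + 1 = k)
    (hp : p ∈ M.E) (hpH : p ∉ H) : ¬ φ H ⊆ φ (M.closure {p}) := by
  have hclE : M.closure ∅ ⊆ H := by
    rw [← hH.closure]; exact M.closure_subset_closure (empty_subset H)
  have hploop : p ∉ M.closure ∅ := fun h => hpH (hclE h)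
  have claim : ∀ n : ℕ, ∀ G D : Set α, M.IsFlat G → M.IsFlat D → p ∈ G → D ⊆ H →
      D ⊆ G → M.rkn D + 1 = M.rkn G → M.rkn G + n = k → ¬ φ H ⊆ φ G := by
    intro n
    induction n with
    | zero =>
      intro G D hG hD hpG hDH hDG hrDG hsum hφsub
      have hGE : G = M.E :=
        flat_eq_of_subset_of_rkn_le hG M.ground_isFlat hG.subset_ground (by omega)
      subst hGE
      have e1 := adjoint_rkn_phi hk hk' hφ hinj hrev hG
      have e2 := adjoint_rkn_phi hk hk' hφ hinj hrev hH
      have h3 : M'.rkn (φ H) ≤ M'.rkn (φ M.E) := M'.rkn_mono hφsub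
      omega
    | succ n ih =>
      intro G D hG hD hpG hDH hDG hrDG hsum hφsub
      have hHG : ¬ H ⊆ G := by
        intro hsub
        have h1 : M.rkn (insert p H) = M.rkn H + 1 :=
          rkn_insert_of_not_mem_closure hp hH.subset_ground (by rwa [hH.closure])
        have h2 : M.rkn (insert p H) ≤ M.rkn G :=
          M.rkn_mono (insert_subset hpG hsub)
        omega
      obtain ⟨a, haH, haG⟩ := Set.not_subset.mp hHG
      have haE : a ∈ M.E := hH.subset_ground haH
      set G' := M.closure (insert a G) with hG'def
      set D' := M.closure (insert a D) with hD'def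
      have hG' : M.IsFlat G' := M.closure_flat'_s19 _
      have hD' : M.IsFlat D' := M.closure_flat'_s19 _
      have hGsubG' : G ⊆ G' := (subset_insert a G).trans
        (M.subset_closure _ (insert_subset haE hG.subset_ground))
      have hrG' : M.rkn G' = M.rkn G + 1 := by
        rw [hG'def, M.rkn_closure_eq,
          rkn_insert_of_not_mem_closure haE hG.subset_ground (by rwa [hG.closure])]
      have haD : a ∉ D := fun h => haG (hDG h)
      have hrD' : M.rkn D' = M.rkn D + 1 := by
        rw [hD'def, M.rkn_closure_eq,
          rkn_insert_of_not_mem_closure haE hD.subset_ground (by rwa [hD.closure])]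
      have hD'H : D' ⊆ H := by
        rw [hD'def, ← hH.closure]
        exact M.closure_subset_closure (insert_subset haH hDH)
      have hD'G' : D' ⊆ G' := by
        rw [hD'def, hG'def]
        exact M.closure_subset_closure (insert_subset_insert hDG)
      by_cases hcase : φ H ⊆ φ G'
      · exact ih G' D' hG' hD' (hGsubG' hpG) hD'H hD'G' (by omega) (by omega) hcase
      -- contradiction case
      set T := M'.closure (φ G' ∪ φ H) with hTdef
      have hT : M'.IsFlat T := M'.closure_flat'_s19 _
      have hφG : M'.IsFlat (φ G) := hφ _ hG
      have hφG' : M'.IsFlat (φ G') := hφ _ hG'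
      have hφD' : M'.IsFlat (φ D') := hφ _ hD'
      have hunionE : φ G' ∪ φ H ⊆ M'.E :=
        Set.union_subset hφG'.subset_ground (hφ _ hH).subset_ground
      have hTsubG : T ⊆ φ G := by
        have h1 : φ G' ∪ φ H ⊆ φ G :=
          Set.union_subset (hrev G G' hG hG' hGsubG') hφsub
        rw [hTdef, ← hφG.closure]
        exact M'.closure_subset_closure h1
      have hTsubD' : T ⊆ φ D' := by
        have h1 : φ G' ∪ φ H ⊆ φ D' :=
          Set.union_subset (hrev D' G' hD' hG' hD'G') (hrev D' H hD' hH hD'H)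
        rw [hTdef, ← hφD'.closure]
        exact M'.closure_subset_closure h1
      have hG'T : φ G' ⊂ T := by
        refine ⟨(Set.subset_union_left).trans (M'.subset_closure _ hunionE), ?_⟩
        intro h
        obtain ⟨y, hy1, hy2⟩ := Set.not_subset.mp hcase
        exact hy2 (h ((M'.subset_closure _ hunionE) (Set.mem_union_right _ hy1)))
      have hrT : M'.rkn (φ G') < M'.rkn T := rkn_lt_of_flat_ssubset hφG' hT hG'T
      have e1 := adjoint_rkn_phi hk hk' hφ hinj hrev hG
      have e2 := adjoint_rkn_phi hk hk' hφ hinj hrev hG'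
      have e3 := adjoint_rkn_phi hk hk' hφ hinj hrev hD'
      have hTeqG : T = φ G :=
        flat_eq_of_subset_of_rkn_le hT hφG hTsubG (by omega)
      have hTeqD' : T = φ D' :=
        flat_eq_of_subset_of_rkn_le hT hφD' hTsubD' (by omega)
      have hGD' : G = D' := hinj hG hD' (hTeqG.symm.trans hTeqD')
      exact hpH (hD'H (hGD' ▸ hpG))
  intro hφsub
  have hG₀ : M.IsFlat (M.closure {p}) := M.closure_flat'_s19 _
  have hD₀ : M.IsFlat (M.closure ∅) := M.closure_flat'_s19 _
  have hpG₀ : p ∈ M.closure {p} := M.mem_closure_self p hp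
  have hD₀G₀ : M.closure ∅ ⊆ M.closure {p} := M.closure_subset_closure (empty_subset _)
  have hrG₀ : M.rkn (M.closure {p}) = 1 := by
    have : ({p} : Set α) = insert p ∅ := by simp
    rw [M.rkn_closure_eq, this,
      rkn_insert_of_not_mem_closure hp (empty_subset _) hploop, M.rkn_empty]
  have hrD₀ : M.rkn (M.closure ∅) = 0 := by rw [M.rkn_closure_eq, M.rkn_empty]
  have hk1 : 1 ≤ k := by omega
  exact claim (k - 1) (M.closure {p}) (M.closure ∅) hG₀ hD₀ hpG₀ hclE hD₀G₀
    (by omega) (by omega) hφsub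

/-- Consequence: `φ F` is not contained in `φ (cl {r})` when `r ∉ F`. -/
lemma adjoint_not_subset_point
    (hk : M.rkn M.E = k) (hk' : M'.rkn M'.E = k)
    (hφ : ∀ F, M.IsFlat F → M'.IsFlat (φ F))
    (hinj : Set.InjOn φ {F | M.IsFlat F})
    (hrev : ∀ F₁ F₂, M.IsFlat F₁ → M.IsFlat F₂ → F₁ ⊆ F₂ → φ F₂ ⊆ φ F₁)
    {F : Set α} {r : α} (hF : M.IsFlat F) (hr : r ∈ M.E) (hrF : r ∉ F) :
    ¬ φ F ⊆ φ (M.closure {r}) := by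
  intro hsub
  obtain ⟨H, hHflat, hHrk, hFH, hrH⟩ := exists_copoint hF hr hrF
  have hφH : φ H ⊆ φ (M.closure {r}) := (hrev F H hF hHflat hFH).trans hsub
  exact adjoint_pt hk hk' hφ hinj hrev hHflat (by omega) hr hrH hφH

end AdjointLemmas


section Induced

open Matroid

variable {β C : Type*} [Finite β] [Finite C]

/-- The polymatroid rank of a union of flats. -/
noncomputable def muf (M' : Matroid β) (Φ : C → Set β) (B : Set C) : ℕ :=
  M'.rkn (⋃ c ∈ B, Φ c)

/-- The rank function of the matroid induced by the assignment `Φ`. -/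
noncomputable def rhof (M' : Matroid β) (Φ : C → Set β) (A : Set C) : ℕ :=
  sInf ((fun B => (A \ B).ncard + muf M' Φ B) '' {B | B ⊆ A})

variable {M' : Matroid β} {Φ : C → Set β} {A A' B B' I J : Set C} {c x : C}

lemma rhof_le (hB : B ⊆ A) : rhof M' Φ A ≤ (A \ B).ncard + muf M' Φ B :=
  Nat.sInf_le ⟨B, hB, rfl⟩

lemma rhof_spec (M' : Matroid β) (Φ : C → Set β) (A : Set C) :
    ∃ B, B ⊆ A ∧ rhof M' Φ A = (A \ B).ncard + muf M' Φ B := by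
  have hne : ((fun B => (A \ B).ncard + muf M' Φ B) '' {B | B ⊆ A}).Nonempty :=
    ⟨_, Set.mem_image_of_mem _ (by simp : A ∈ {B | B ⊆ A})⟩
  obtain ⟨B, hB, hEq⟩ := Nat.sInf_mem hne
  exact ⟨B, hB, hEq.symm⟩

lemma muf_empty (M' : Matroid β) (Φ : C → Set β) : muf M' Φ ∅ = 0 := by
  rw [muf, Set.biUnion_empty, M'.rkn_empty]

lemma muf_mono (h : B ⊆ B') : muf M' Φ B ≤ muf M' Φ B' :=
  M'.rkn_mono (Set.biUnion_subset_biUnion_left h)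

lemma muf_submod (hΦ : ∀ c, Φ c ⊆ M'.E) (B B' : Set C) :
    muf M' Φ (B ∪ B') + muf M' Φ (B ∩ B') ≤ muf M' Φ B + muf M' Φ B' := by
  have hU : ∀ B₀ : Set C, (⋃ c ∈ B₀, Φ c) ⊆ M'.E := fun B₀ =>
    Set.iUnion₂_subset fun c _ => hΦ c
  have h1 : muf M' Φ (B ∪ B') = M'.rkn ((⋃ c ∈ B, Φ c) ∪ ⋃ c ∈ B', Φ c) := by
    rw [muf, Set.biUnion_union]
  have h2 : muf M' Φ (B ∩ B') ≤ M'.rkn ((⋃ c ∈ B, Φ c) ∩ ⋃ c ∈ B', Φ c) := by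
    refine M'.rkn_mono (Set.subset_inter ?_ ?_)
    · exact Set.biUnion_subset_biUnion_left Set.inter_subset_left
    · exact Set.biUnion_subset_biUnion_left Set.inter_subset_right
  have h3 := M'.rkn_submod (hU B) (hU B')
  have h4 : muf M' Φ B = M'.rkn (⋃ c ∈ B, Φ c) := rfl
  have h5 : muf M' Φ B' = M'.rkn (⋃ c ∈ B', Φ c) := rfl
  omega

lemma rhof_mono (h : A ⊆ A') : rhof M' Φ A ≤ rhof M' Φ A' := by
  obtain ⟨B', hB', hEq⟩ := rhof_spec M' Φ A'
  have h1 : rhof M' Φ A ≤ (A \ (B' ∩ A)).ncard + muf M' Φ (B' ∩ A) :=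
    rhof_le Set.inter_subset_right
  have h2 : A \ (B' ∩ A) ⊆ A' \ B' := fun y hy =>
    ⟨h hy.1, fun hyB => hy.2 ⟨hyB, hy.1⟩⟩
  have h3 : (A \ (B' ∩ A)).ncard ≤ (A' \ B').ncard :=
    Set.ncard_le_ncard h2 (A' \ B').toFinite
  have h4 : muf M' Φ (B' ∩ A) ≤ muf M' Φ B' := muf_mono Set.inter_subset_left
  omega

lemma rhof_le_ncard (M' : Matroid β) (Φ : C → Set β) (A : Set C) :
    rhof M' Φ A ≤ A.ncard := by
  have h := rhof_le (M' := M') (Φ := Φ) (empty_subset A)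
  rwa [muf_empty, Set.diff_empty, Nat.add_zero] at h

lemma rhof_union_le (M' : Matroid β) (Φ : C → Set β) (A A' : Set C) :
    rhof M' Φ (A ∪ A') ≤ rhof M' Φ A + A'.ncard := by
  obtain ⟨B, hB, hEq⟩ := rhof_spec M' Φ A
  have h1 : rhof M' Φ (A ∪ A') ≤ ((A ∪ A') \ B).ncard + muf M' Φ B :=
    rhof_le (hB.trans Set.subset_union_left)
  have h2 : (A ∪ A') \ B ⊆ (A \ B) ∪ A' := fun y hy => by
    rcases hy.1 with h | h
    · exact Or.inl ⟨h, hy.2⟩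
    · exact Or.inr h
  have h3 : ((A ∪ A') \ B).ncard ≤ (A \ B).ncard + A'.ncard :=
    (Set.ncard_le_ncard h2 (((A \ B) ∪ A').toFinite)).trans
      (Set.ncard_union_le _ _)
  omega

lemma rhof_submod (hΦ : ∀ c, Φ c ⊆ M'.E) (A A' : Set C) :
    rhof M' Φ (A ∪ A') + rhof M' Φ (A ∩ A') ≤ rhof M' Φ A + rhof M' Φ A' := by
  obtain ⟨B, hB, hEq⟩ := rhof_spec M' Φ A
  obtain ⟨B', hB', hEq'⟩ := rhof_spec M' Φ A'
  have h1 : rhof M' Φ (A ∪ A') ≤ ((A ∪ A') \ (B ∪ B')).ncard + muf M' Φ (B ∪ B') :=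
    rhof_le (Set.union_subset_union hB hB')
  have h2 : rhof M' Φ (A ∩ A') ≤ ((A ∩ A') \ (B ∩ B')).ncard + muf M' Φ (B ∩ B') :=
    rhof_le (Set.inter_subset_inter hB hB')
  have hmu := muf_submod hΦ B B'
  -- cardinality identity
  have c1 : ((A ∪ A') \ (B ∪ B')).ncard + (B ∪ B').ncard = (A ∪ A').ncard :=
    Set.ncard_diff_add_ncard_of_subset (Set.union_subset_union hB hB') (A ∪ A').toFinite
  have c2 : ((A ∩ A') \ (B ∩ B')).ncard + (B ∩ B').ncard = (A ∩ A').ncard :=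
    Set.ncard_diff_add_ncard_of_subset (Set.inter_subset_inter hB hB') (A ∩ A').toFinite
  have c3 : (A \ B).ncard + B.ncard = A.ncard :=
    Set.ncard_diff_add_ncard_of_subset hB A.toFinite
  have c4 : (A' \ B').ncard + B'.ncard = A'.ncard :=
    Set.ncard_diff_add_ncard_of_subset hB' A'.toFinite
  have c5 : (A ∪ A').ncard + (A ∩ A').ncard = A.ncard + A'.ncard :=
    Set.ncard_union_add_ncard_inter A A' A.toFinite A'.toFinite
  have c6 : (B ∪ B').ncard + (B ∩ B').ncard = B.ncard + B'.ncard :=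
    Set.ncard_union_add_ncard_inter B B' B.toFinite B'.toFinite
  omega

lemma rhof_insert_le (M' : Matroid β) (Φ : C → Set β) (A : Set C) (x : C) :
    rhof M' Φ (insert x A) ≤ rhof M' Φ A + 1 := by
  have h := rhof_union_le M' Φ A {x}
  rw [Set.union_singleton, Set.ncard_singleton] at h
  exact h

lemma rhof_absorb (hΦ : ∀ c, Φ c ⊆ M'.E) (A : Set C)
    (S : Set C) (h : ∀ x ∈ S, rhof M' Φ (insert x A) = rhof M' Φ A) :
    rhof M' Φ (A ∪ S) = rhof M' Φ A := by
  have key : ∀ T : Set C, T.Finite →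
      (∀ x ∈ T, rhof M' Φ (insert x A) = rhof M' Φ A) →
      rhof M' Φ (A ∪ T) = rhof M' Φ A := by
    intro T hT
    refine Set.Finite.induction_on
      (motive := fun T _ => (∀ x ∈ T, rhof M' Φ (insert x A) = rhof M' Φ A) →
        rhof M' Φ (A ∪ T) = rhof M' Φ A) T hT ?_ ?_
    · intro _; rw [Set.union_empty]
    · intro y S' _ _ ih h
      have hy : rhof M' Φ (insert y A) = rhof M' Φ A := h y (Set.mem_insert _ _)
      have hih : rhof M' Φ (A ∪ S') = rhof M' Φ A :=
        ih fun x hx => h x (Set.mem_insert_of_mem _ hx)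
      have hsub := rhof_submod hΦ (A ∪ S') (insert y A)
      have hU : (A ∪ S') ∪ insert y A = A ∪ insert y S' := by
        ext z
        simp only [Set.mem_union, Set.mem_insert_iff]
        tauto
      have hI : A ⊆ (A ∪ S') ∩ insert y A :=
        Set.subset_inter Set.subset_union_left (Set.subset_insert _ _)
      have h1 : rhof M' Φ A ≤ rhof M' Φ ((A ∪ S') ∩ insert y A) := rhof_mono hI
      have h2 : rhof M' Φ A ≤ rhof M' Φ (A ∪ insert y S') :=
        rhof_mono Set.subset_union_left
      rw [hU] at hsub
      omega
  exact key S S.toFinite h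

/-- The induced matroid exists: ground set `univ`, rank function `rhof`. -/
lemma exists_induced_matroid (M' : Matroid β) (Φ : C → Set β) (hΦ : ∀ c, Φ c ⊆ M'.E) :
    ∃ N : Matroid C, N.E = Set.univ ∧ ∀ A : Set C, N.rkn A = rhof M' Φ A := by
  classical
  set Ind : Set C → Prop := fun I => rhof M' Φ I = I.ncard with hInd
  have ind_insert_eq : ∀ (I : Set C) (x : C), Ind I → x ∉ I → ¬ Ind (insert x I) →
      rhof M' Φ (insert x I) = rhof M' Φ I := by
    intro I x hI hxI hnot
    have h1 := rhof_insert_le M' Φ I x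
    have h2 : rhof M' Φ I ≤ rhof M' Φ (insert x I) := rhof_mono (Set.subset_insert _ _)
    have h3 : (insert x I).ncard = I.ncard + 1 := Set.ncard_insert_of_notMem hxI I.toFinite
    rw [hInd] at hI hnot
    simp only [h3] at hnot
    omega
  have ind_subset : ∀ ⦃I J : Set C⦄, Ind J → I ⊆ J → Ind I := by
    intro I J hJ hIJ
    have h1 : I ∪ (J \ I) = J := Set.union_diff_cancel hIJ
    have h2 : rhof M' Φ J ≤ rhof M' Φ I + (J \ I).ncard := by
      have := rhof_union_le M' Φ I (J \ I)
      rwa [h1] at this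
    have h3 : (J \ I).ncard + I.ncard = J.ncard :=
      Set.ncard_diff_add_ncard_of_subset hIJ J.toFinite
    have h4 : rhof M' Φ I ≤ I.ncard := rhof_le_ncard M' Φ I
    rw [hInd] at hJ ⊢
    omega
  have ind_empty : Ind ∅ := by
    rw [hInd]
    have h1 : rhof M' Φ ∅ ≤ (∅ : Set C).ncard := rhof_le_ncard M' Φ ∅
    simp only [Set.ncard_empty] at h1 ⊢
    omega
  have ind_aug : ∀ ⦃I J : Set C⦄, Ind I → Ind J → I.ncard < J.ncard →
      ∃ e ∈ J, e ∉ I ∧ Ind (insert e I) := by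
    intro I J hI hJ hlt
    by_contra hcon
    push_neg at hcon
    have habs : rhof M' Φ (I ∪ (J \ I)) = rhof M' Φ I := by
      refine rhof_absorb hΦ I (J \ I) fun x hx => ?_
      exact ind_insert_eq I x hI hx.2 (hcon x hx.1 hx.2)
    have hJsub : J ⊆ I ∪ (J \ I) := fun y hy => by
      by_cases h : y ∈ I
      · exact Or.inl h
      · exact Or.inr ⟨hy, h⟩
    have h2 : rhof M' Φ J ≤ rhof M' Φ (I ∪ (J \ I)) := rhof_mono hJsub
    rw [hInd] at hI hJ
    omega
  set IM : IndepMatroid C := IndepMatroid.ofFinite (Set.toFinite (Set.univ : Set C))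
    Ind ind_empty ind_subset ind_aug (fun I _ => Set.subset_univ I) with hIM
  refine ⟨IM.matroid, by simp [hIM], ?_⟩
  intro A
  obtain ⟨I, hI⟩ := IM.matroid.exists_isBasis' A
  have hIind : Ind I := by
    have := hI.indep
    rwa [IndepMatroid.matroid_indep_iff] at this
  have hIA : I ⊆ A := hI.subset
  have hmax : ∀ x ∈ A \ I, ¬ Ind (insert x I) := by
    intro x hx hind
    have h1 : insert x I ⊆ I :=
      hI.2 ⟨by rwa [IndepMatroid.matroid_indep_iff], insert_subset hx.1 hIA⟩
        (Set.subset_insert _ _)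
    exact hx.2 (h1 (Set.mem_insert _ _))
  have habs : rhof M' Φ (I ∪ (A \ I)) = rhof M' Φ I := by
    refine rhof_absorb hΦ I (A \ I) fun x hx => ?_
    exact ind_insert_eq I x hIind hx.2 (hmax x hx)
  rw [Set.union_diff_cancel hIA] at habs
  rw [rkn_eq_of_basis' hI, habs, hIind]

end Induced


/-- if `k` is the triangle number of `X` (the height of `L(X)`) and
some matroid of rank `k` in `R(Xᵀ)` has an adjoint, then the matroid minimum rank
of `X` equals `k`. -/
theorem mr_eq_tri_of_adjoint [Fintype R] [Fintype C] (X : R → C → Bool) (k : ℕ)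
    (htri : IsGreatest
      {n : ℕ | ∃ f : Fin (n + 1) → Set C, StrictMono f ∧ ∀ i, f i ∈ LX X} k)
    (hadj : ∃ M ∈ RX (fun c r => X r c), M.mrk = k ∧
      ∃ M' : Matroid (Set R), M.IsAdjoint M') :
    mr X = k := by
  classical
  obtain ⟨M, hMRX, hMk, M', hadj'⟩ := hadj
  obtain ⟨hME, hMflat⟩ := hMRX
  obtain ⟨hsimp1, hsimp2, hmrk', φ, hφ, hinj, hrev, hbij⟩ := hadj'
  -- Lower bound: every matroid in RX X has rank at least k
  have hlower : ∀ N₀ : Matroid C, N₀ ∈ RX X → k ≤ N₀.mrk := by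
    rintro N₀ ⟨hN₀E, hN₀flat⟩
    have hLXflat : ∀ F ∈ LX X, N₀.IsFlat F := by
      rintro F ⟨S, rfl⟩
      rcases S.eq_empty_or_nonempty with rfl | hS
      · have h1 : ZRow X (∅ : Set R) = Set.univ := by
          ext c; simp [ZRow]
        rw [h1, ← hN₀E]
        exact N₀.ground_isFlat
      · have h1 : ZRow X S = ⋂ r : S, ZRow X {r.1} := by
          ext c
          simp only [ZRow, mem_setOf_eq, Set.mem_iInter, Set.mem_singleton_iff]
          constructor
          · intro h r b hb
            subst hb; exact h _ r.2
          · intro h b hb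
            exact h ⟨b, hb⟩ b rfl
        rw [h1]
        have : Nonempty S := hS.to_subtype
        exact Matroid.IsFlat.iInter fun r => hN₀flat r.1
    obtain ⟨f, hmono, hfLX⟩ := htri.1
    have hchain : ∀ m : ℕ, ∀ h : m < k + 1, m ≤ N₀.rkn (f ⟨m, h⟩) := by
      intro m
      induction m with
      | zero => intro _; exact Nat.zero_le _
      | succ m ih =>
        intro h
        have h1 := ih (by omega)
        have hlt : (⟨m, by omega⟩ : Fin (k + 1)) < ⟨m + 1, h⟩ := by
          simp [Fin.mk_lt_mk]
        have hss := hmono hlt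
        have h2 := Matroid.rkn_lt_of_flat_ssubset
          (hLXflat _ (hfLX _)) (hLXflat _ (hfLX _)) hss
        omega
    have hk2 := hchain k (by omega)
    have hle : N₀.rkn (f ⟨k, by omega⟩) ≤ N₀.rkn N₀.E :=
      N₀.rkn_mono (hLXflat _ (hfLX _)).subset_ground
    rw [Matroid.mrk_eq_rkn]
    omega
  -- Upper bound: construct a matroid in RX X of rank at most k
  have hkM : M.rkn M.E = k := by rw [← Matroid.mrk_eq_rkn, hMk]
  have hkM' : M'.rkn M'.E = k := by rw [← Matroid.mrk_eq_rkn, hmrk', hMk]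
  set Z : C → Set R := fun c => ZRow (fun c r => X r c) {c} with hZ
  have hZflat : ∀ c, M.IsFlat (Z c) := fun c => hMflat c
  have hZmem : ∀ (c : C) (r : R), r ∈ Z c ↔ X r c = false := by
    intro c r; simp [hZ, ZRow]
  have hWmem : ∀ (r : R) (c : C), c ∈ ZRow X {r} ↔ X r c = false := by
    intro r c; simp [ZRow]
  set Φ : C → Set (Set R) := fun c => φ (Z c) with hΦdef
  have hΦE : ∀ c, Φ c ⊆ M'.E := fun c => (hφ _ (hZflat c)).subset_ground
  obtain ⟨N, hNE, hNrkn⟩ := exists_induced_matroid M' Φ hΦE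
  have hNmem : N ∈ RX X := by
    refine ⟨hNE, fun r => ?_⟩
    set W := ZRow X {r} with hW
    have hWE : W ⊆ N.E := by rw [hNE]; exact Set.subset_univ _
    refine Matroid.flat_of_closure_subset' hWE ?_
    intro c' hc'
    by_contra hc'W
    have hc'E : c' ∈ N.E := N.mem_ground_of_mem_closure hc'
    have hrE : r ∈ M.E := by rw [hME]; exact Set.mem_univ r
    have hrZ : r ∉ Z c' := by
      intro h
      exact hc'W ((hWmem r c').mpr ((hZmem c' r).mp h))
    have hnotsub : ¬ Φ c' ⊆ φ (M.closure {r}) :=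
      adjoint_not_subset_point hkM hkM' hφ hinj hrev (hZflat c') hrE hrZ
    have hWsub : ∀ c ∈ W, Φ c ⊆ φ (M.closure {r}) := by
      intro c hc
      have hrc : r ∈ Z c := (hZmem c r).mpr ((hWmem r c).mp hc)
      have h1 : M.closure {r} ⊆ Z c := by
        rw [← (hZflat c).closure]
        exact M.closure_subset_closure (Set.singleton_subset_iff.mpr hrc)
      exact hrev _ _ (M.closure_flat'_s19 _) (hZflat c) h1
    have hstep : ∀ B ⊆ W, muf M' Φ B + 1 ≤ muf M' Φ (insert c' B) := by
      intro B hB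
      obtain ⟨y, hy1, hy2⟩ := Set.not_subset.mp hnotsub
      have hUsub : (⋃ c ∈ B, Φ c) ⊆ φ (M.closure {r}) :=
        Set.iUnion₂_subset fun c hc => hWsub c (hB hc)
      have hycl : y ∉ M'.closure (⋃ c ∈ B, Φ c) := by
        intro h
        apply hy2
        have h2 := M'.closure_subset_closure hUsub h
        rwa [(hφ _ (M.closure_flat'_s19 _)).closure] at h2
      have hyE : y ∈ M'.E := hΦE c' hy1
      have hUE : (⋃ c ∈ B, Φ c) ⊆ M'.E := Set.iUnion₂_subset fun c _ => hΦE c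
      have h1 : M'.rkn (insert y (⋃ c ∈ B, Φ c)) = M'.rkn (⋃ c ∈ B, Φ c) + 1 :=
        Matroid.rkn_insert_of_not_mem_closure hyE hUE hycl
      have h2 : insert y (⋃ c ∈ B, Φ c) ⊆ ⋃ c ∈ insert c' B, Φ c := by
        rw [Set.biUnion_insert]
        exact Set.insert_subset (Set.mem_union_left _ hy1) Set.subset_union_right
      have h3 := M'.rkn_mono h2
      have h4 : muf M' Φ (insert c' B) = M'.rkn (⋃ c ∈ insert c' B, Φ c) := rfl
      have h5 : muf M' Φ B = M'.rkn (⋃ c ∈ B, Φ c) := rfl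
      omega
    have hrhoW : rhof M' Φ W + 1 ≤ rhof M' Φ (insert c' W) := by
      obtain ⟨B₀, hB₀, hEq⟩ := rhof_spec M' Φ (insert c' W)
      by_cases hc'B : c' ∈ B₀
      · set B₁ := B₀ \ {c'} with hB₁
        have hB₁W : B₁ ⊆ W := by
          intro z hz
          rcases hB₀ hz.1 with h | h
          · exact absurd h (fun h' => hz.2 (by rw [h']; exact rfl))
          · exact h
        have hdiff : insert c' W \ B₀ = W \ B₁ := by
          ext z
          constructor
          · rintro ⟨hz1, hz2⟩
            rcases hz1 with rfl | hz1
            · exact absurd hc'B hz2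
            · exact ⟨hz1, fun hzB => hz2 hzB.1⟩
          · rintro ⟨hz1, hz2⟩
            refine ⟨Or.inr hz1, fun hzB => ?_⟩
            by_cases hzc : z = c'
            · subst hzc; exact hc'W hz1
            · exact hz2 ⟨hzB, fun h => hzc (Set.mem_singleton_iff.mp h)⟩
        have hB₀i : B₀ = insert c' B₁ := by
          ext z
          constructor
          · intro h
            by_cases hzc : z = c'
            · exact Or.inl hzc
            · exact Or.inr ⟨h, fun h' => hzc (Set.mem_singleton_iff.mp h')⟩
          · rintro (rfl | ⟨h, _⟩)
            · exact hc'B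
            · exact h
        have hst := hstep B₁ hB₁W
        have hle := rhof_le (M' := M') (Φ := Φ) hB₁W
        rw [hdiff, hB₀i] at hEq
        omega
      · have hB₀W : B₀ ⊆ W := by
          intro z hz
          rcases hB₀ hz with h | h
          · subst h; exact absurd hz hc'B
          · exact h
        have hdiff : insert c' W \ B₀ = insert c' (W \ B₀) := by
          ext z
          constructor
          · rintro ⟨hz1, hz2⟩
            rcases hz1 with rfl | hz1
            · exact Or.inl rfl
            · exact Or.inr ⟨hz1, hz2⟩
          · rintro (rfl | ⟨hz1, hz2⟩)
            · exact ⟨Or.inl rfl, hc'B⟩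
            · exact ⟨Or.inr hz1, hz2⟩
        have hcard : (insert c' (W \ B₀)).ncard = (W \ B₀).ncard + 1 :=
          Set.ncard_insert_of_notMem (fun h => hc'W h.1) (W \ B₀).toFinite
        have hle := rhof_le (M' := M') (Φ := Φ) hB₀W
        rw [hdiff] at hEq
        rw [hcard] at hEq
        omega
    have hfin := (Matroid.mem_closure_iff_rkn hWE hc'E).mp hc'
    rw [hNrkn, hNrkn] at hfin
    omega
  have hNrank : N.mrk ≤ k := by
    rw [Matroid.mrk_eq_rkn, hNE, hNrkn]
    have h1 : rhof M' Φ Set.univ ≤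
        ((Set.univ : Set C) \ Set.univ).ncard + muf M' Φ Set.univ :=
      rhof_le subset_rfl
    have h2 : muf M' Φ Set.univ ≤ M'.rkn M'.E :=
      M'.rkn_mono (Set.iUnion₂_subset fun c _ => hΦE c)
    have h3 : ((Set.univ : Set C) \ Set.univ).ncard = 0 := by
      rw [Set.diff_self, Set.ncard_empty]
    omega
  have hNk : N.mrk = k := le_antisymm hNrank (hlower N hNmem)
  refine le_antisymm (Nat.sInf_le ⟨N, hNmem, hNk⟩) ?_
  refine le_csInf ⟨k, ⟨N, hNmem, hNk⟩⟩ ?_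
  rintro b ⟨N₀, hN₀, rfl⟩
  exact hlower N₀ hN₀
end
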